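/- Let F : ℝ → ℝ be differentiable with F(0) = 0 whose derivative satisfies 0 < m ≤ F'(t) ≤ M < ∞ for all t. Let Φ = (φ_λ) generate a Riesz basis of a closed subspace V ⊆ L², i.e., A‖c‖₂ ≤ ‖Σ_λ c(λ)φ_λ‖_{L²} ≤ B‖c‖₂. Then the map S : c ↦ (⟨F(cᵀΦ), φ_λ⟩)_λ satisfies m A²‖c₁ − c₂‖₂² ≤ ⟨c₁ − c₂, S(c₁) − S(c₂)⟩ ≤ M B²‖c₁ − c₂‖₂² for all c₁, c₂ ∈ ℓ². -/

import Mathlib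

open MeasureTheory

/-- Pointwise mean-value bound: if `m ≤ F' ≤ M` then
`m (a-b)² ≤ (F a - F b)(a-b) ≤ M (a-b)²`. -/
lemma slope_bounds_aux (F F' : ℝ → ℝ) (hdiff : ∀ t, HasDerivAt F (F' t) t)
    (m M : ℝ) (hb : ∀ t, m ≤ F' t ∧ F' t ≤ M) (a b : ℝ) :
    m * (a - b) ^ 2 ≤ (F a - F b) * (a - b) ∧
      (F a - F b) * (a - b) ≤ M * (a - b) ^ 2 := by
  have h1 : Monotone (fun x => F x - m * x) := by
    have hd : ∀ x, HasDerivAt (fun x => F x - m * x) (F' x - m) x := by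
      intro x
      exact ((hdiff x).sub ((hasDerivAt_id x).const_mul m)).congr_deriv (by ring)
    refine monotone_of_deriv_nonneg (fun x => (hd x).differentiableAt) ?_
    intro x
    rw [(hd x).deriv]
    linarith [(hb x).1]
  have h2 : Monotone (fun x => M * x - F x) := by
    have hd : ∀ x, HasDerivAt (fun x => M * x - F x) (M - F' x) x := by
      intro x
      exact (((hasDerivAt_id x).const_mul M)).sub (hdiff x) |>.congr_deriv (by ring)
    refine monotone_of_deriv_nonneg (fun x => (hd x).differentiableAt) ?_
    intro x
    rw [(hd x).deriv]
    linarith [(hb x).2]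
  rcases le_total b a with hba | hab
  · have e1 := h1 hba
    have e2 := h2 hba
    simp only at e1 e2
    constructor <;> nlinarith
  · have e1 := h1 hab
    have e2 := h2 hab
    simp only at e1 e2
    constructor <;> nlinarith

set_option maxHeartbeats 1600000

/-- Let `F : ℝ → ℝ` be differentiable with `F 0 = 0` and
`0 < m ≤ F' ≤ M`, and let `Φ = (φ_λ)` generate a Riesz basis with bounds `A ≤ B`
(synthesis map `T c = Σ_λ c λ • φ_λ`). Then the sampling map
`S : c ↦ (⟨F(cᵀΦ), φ_λ⟩)_λ` satisfies
`m A² ‖c₁−c₂‖² ≤ ⟨c₁−c₂, S c₁ − S c₂⟩ ≤ M B² ‖c₁−c₂‖²`. -/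
theorem stmt_14 {α : Type*} [MeasurableSpace α] (μ : Measure α) (Λ : Type*)
    (F F' : ℝ → ℝ) (hdiff : ∀ t, HasDerivAt F (F' t) t) (hF0 : F 0 = 0)
    (m M : ℝ) (hm : 0 < m) (hbounds : ∀ t, m ≤ F' t ∧ F' t ≤ M)
    (Φ : Λ → Lp ℝ 2 μ)
    (A B : ℝ) (hA : 0 < A) (hAB : A ≤ B)
    (T : lp (fun _ : Λ => ℝ) 2 → Lp ℝ 2 μ)
    (hT : ∀ c : lp (fun _ : Λ => ℝ) 2, HasSum (fun lam : Λ => c lam • Φ lam) (T c))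
    (hRiesz : ∀ c : lp (fun _ : Λ => ℝ) 2, A * ‖c‖ ≤ ‖T c‖ ∧ ‖T c‖ ≤ B * ‖c‖)
    (c₁ c₂ : lp (fun _ : Λ => ℝ) 2) (G₁ G₂ : Lp ℝ 2 μ)
    (hG₁ : (G₁ : α → ℝ) =ᵐ[μ] fun t => F ((T c₁ : α → ℝ) t))
    (hG₂ : (G₂ : α → ℝ) =ᵐ[μ] fun t => F ((T c₂ : α → ℝ) t)) :
    m * A ^ 2 * ‖c₁ - c₂‖ ^ 2 ≤
        (∑' lam : Λ, (c₁ lam - c₂ lam) *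
          ((inner ℝ G₁ (Φ lam) : ℝ) - (inner ℝ G₂ (Φ lam) : ℝ))) ∧
      (∑' lam : Λ, (c₁ lam - c₂ lam) *
          ((inner ℝ G₁ (Φ lam) : ℝ) - (inner ℝ G₂ (Φ lam) : ℝ))) ≤
        M * B ^ 2 * ‖c₁ - c₂‖ ^ 2 := by
  set G : Lp ℝ 2 μ := G₁ - G₂ with hGdef
  set h : Lp ℝ 2 μ := T c₁ - T c₂ with hhdef
  -- the synthesis sum for the difference
  have hcoe : ∀ lam, (c₁ - c₂) lam = c₁ lam - c₂ lam := by
    intro lam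
    rw [lp.coeFn_sub]
    rfl
  have hsum : HasSum (fun lam => (c₁ lam - c₂ lam) • Φ lam) h := by
    simpa [sub_smul] using (hT c₁).sub (hT c₂)
  have hTc : T (c₁ - c₂) = h := by
    refine (hT (c₁ - c₂)).unique ?_
    simpa only [hcoe] using hsum
  -- identify the sum with the inner product ⟪G, h⟫
  have hsum2 : HasSum (fun lam => (c₁ lam - c₂ lam) * (inner ℝ G (Φ lam) : ℝ))
      (inner ℝ G h : ℝ) := by
    have := (innerSL ℝ G).hasSum hsum
    simpa [real_inner_smul_right] using this
  have htsum : (∑' lam : Λ, (c₁ lam - c₂ lam) *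
      ((inner ℝ G₁ (Φ lam) : ℝ) - (inner ℝ G₂ (Φ lam) : ℝ))) = (inner ℝ G h : ℝ) := by
    rw [← hsum2.tsum_eq]
    congr 1
    funext lam
    rw [hGdef, inner_sub_left]
  -- integral representation of the two inner products
  have hinnerGh : (inner ℝ G h : ℝ) = ∫ a, (G : α → ℝ) a * (h : α → ℝ) a ∂μ := by
    rw [L2.inner_def]
    simp [RCLike.inner_apply, mul_comm]
  have hinnerhh : (inner ℝ h h : ℝ) = ∫ a, (h : α → ℝ) a * (h : α → ℝ) a ∂μ := by
    rw [L2.inner_def]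
    simp [RCLike.inner_apply, sq]
  have hint1 : Integrable (fun a => (G : α → ℝ) a * (h : α → ℝ) a) μ := by
    simpa [RCLike.inner_apply] using L2.integrable_inner (𝕜 := ℝ) h G
  have hint2 : Integrable (fun a => (h : α → ℝ) a * (h : α → ℝ) a) μ := by
    simpa [RCLike.inner_apply, sq] using L2.integrable_inner (𝕜 := ℝ) h h
  -- a.e. descriptions of G and h
  have hhae : (h : α → ℝ) =ᵐ[μ] fun a => (T c₁ : α → ℝ) a - (T c₂ : α → ℝ) a :=
    Lp.coeFn_sub (T c₁) (T c₂)
  have hGae : (G : α → ℝ) =ᵐ[μ]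
      fun a => F ((T c₁ : α → ℝ) a) - F ((T c₂ : α → ℝ) a) :=
    (Lp.coeFn_sub G₁ G₂).trans (hG₁.sub hG₂)
  -- a.e. pointwise bounds
  have hae_low : ∀ᵐ a ∂μ,
      m * ((h : α → ℝ) a * (h : α → ℝ) a) ≤ (G : α → ℝ) a * (h : α → ℝ) a := by
    filter_upwards [hhae, hGae] with a ha hg
    have key := slope_bounds_aux F F' hdiff m M hbounds
      ((T c₁ : α → ℝ) a) ((T c₂ : α → ℝ) a)
    rw [ha, hg]
    nlinarith [key.1]
  have hae_high : ∀ᵐ a ∂μ,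
      (G : α → ℝ) a * (h : α → ℝ) a ≤ M * ((h : α → ℝ) a * (h : α → ℝ) a) := by
    filter_upwards [hhae, hGae] with a ha hg
    have key := slope_bounds_aux F F' hdiff m M hbounds
      ((T c₁ : α → ℝ) a) ((T c₂ : α → ℝ) a)
    rw [ha, hg]
    nlinarith [key.2]
  -- integrate the pointwise bounds
  have hlow : m * (inner ℝ h h : ℝ) ≤ (inner ℝ G h : ℝ) := by
    rw [hinnerGh, hinnerhh, ← integral_const_mul]
    exact integral_mono_ae (hint2.const_mul m) hint1 hae_low
  have hhigh : (inner ℝ G h : ℝ) ≤ M * (inner ℝ h h : ℝ) := by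
    rw [hinnerGh, hinnerhh, ← integral_const_mul]
    exact integral_mono_ae hint1 (hint2.const_mul M) hae_high
  -- norms via Riesz bounds
  have hnorm : (inner ℝ h h : ℝ) = ‖h‖ ^ 2 := real_inner_self_eq_norm_sq h
  obtain ⟨hR1, hR2⟩ := hRiesz (c₁ - c₂)
  rw [hTc] at hR1 hR2
  have hM : 0 < M := lt_of_lt_of_le hm (le_trans (hbounds 0).1 (hbounds 0).2)
  rw [hnorm] at hlow hhigh
  rw [htsum]
  have hx0 : (0:ℝ) ≤ ‖c₁ - c₂‖ := norm_nonneg _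
  have hy0 : (0:ℝ) ≤ ‖h‖ := norm_nonneg _
  generalize hx : ‖c₁ - c₂‖ = x at hR1 hR2 hx0 ⊢
  generalize hy : ‖h‖ = y at hR1 hR2 hy0 hlow hhigh
  generalize hI : (inner ℝ G h : ℝ) = I at hlow hhigh ⊢
  have hsq1 : (A * x) * (A * x) ≤ y * y := mul_le_mul hR1 hR1 (mul_nonneg hA.le hx0) hy0
  have hsq2 : y * y ≤ (B * x) * (B * x) := mul_le_mul hR2 hR2 hy0 (mul_nonneg (hA.trans_le hAB).le hx0)
  constructor
  · nlinarith [hsq1, hlow, hm.le]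
  · nlinarith [hsq2, hhigh, hM.le]
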